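/- Let A and B be associative unital k-algebras and R : B ⊗ A → A ⊗ B a linear map, written R(b ⊗ a) = a_R ⊗ b_R, satisfying: R(b ⊗ 1) = 1 ⊗ b, R(1 ⊗ a) = a ⊗ 1, (aa')_R ⊗ b_R = a_R a'_r ⊗ (b_R)_r, and a_R ⊗ (bb')_R = a_{R_r} ⊗ b_r b'_R (where r denotes a second copy of R). Then the multiplication on A ⊗ B defined by (a ⊗ b)(a' ⊗ b') = a·a'_R ⊗ b_R·b' is associative with unit 1 ⊗ 1, i.e. it makes A ⊗ B into an associative unital k-algebra. -/
import Mathlib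

set_option synthInstance.maxHeartbeats 1000000
set_option maxHeartbeats 1000000


open TensorProduct LinearMap

noncomputable section
namespace IUT

variable {k : Type*} [Field k]

section Twisting
variable {A B : Type*} [AddCommGroup A] [Module k A] [AddCommGroup B] [Module k B]

/-- The twisted-tensor-product multiplication map on `A ⊗ B` determined by
multiplications `mA`, `mB` and a linear map `R : B ⊗ A →ₗ A ⊗ B`. -/
def mulOf (mA : A ⊗[k] A →ₗ[k] A) (mB : B ⊗[k] B →ₗ[k] B)
    (R : B ⊗[k] A →ₗ[k] A ⊗[k] B) :
    (A ⊗[k] B) ⊗[k] (A ⊗[k] B) →ₗ[k] A ⊗[k] B :=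
  TensorProduct.map mA mB
    ∘ₗ (TensorProduct.assoc k A A (B ⊗[k] B)).symm.toLinearMap
    ∘ₗ TensorProduct.map LinearMap.id
        ((TensorProduct.assoc k A B B).toLinearMap
          ∘ₗ TensorProduct.map R LinearMap.id
          ∘ₗ (TensorProduct.assoc k B A B).symm.toLinearMap)
    ∘ₗ (TensorProduct.assoc k A B (A ⊗[k] B)).toLinearMap

/-- The axioms of a twisting map, relative to multiplications `mA`, `mB`
with units `uA`, `uB`. -/
def IsTwistingMapMul (mA : A ⊗[k] A →ₗ[k] A) (uA : A)
    (mB : B ⊗[k] B →ₗ[k] B) (uB : B)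
    (R : B ⊗[k] A →ₗ[k] A ⊗[k] B) : Prop :=
  (∀ b : B, R (b ⊗ₜ[k] uA) = uA ⊗ₜ[k] b) ∧
  (∀ a : A, R (uB ⊗ₜ[k] a) = a ⊗ₜ[k] uB) ∧
  (R ∘ₗ TensorProduct.map LinearMap.id mA =
    TensorProduct.map mA LinearMap.id
      ∘ₗ (TensorProduct.assoc k A A B).symm.toLinearMap
      ∘ₗ TensorProduct.map LinearMap.id R
      ∘ₗ (TensorProduct.assoc k A B A).toLinearMap
      ∘ₗ TensorProduct.map R LinearMap.id
      ∘ₗ (TensorProduct.assoc k B A A).symm.toLinearMap) ∧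
  (R ∘ₗ TensorProduct.map mB LinearMap.id =
    TensorProduct.map LinearMap.id mB
      ∘ₗ (TensorProduct.assoc k A B B).toLinearMap
      ∘ₗ TensorProduct.map R LinearMap.id
      ∘ₗ (TensorProduct.assoc k B A B).symm.toLinearMap
      ∘ₗ TensorProduct.map LinearMap.id R
      ∘ₗ (TensorProduct.assoc k B B A).toLinearMap)

/-- The new twisting map `R'` of the invariance-under-twisting theorem:
`R'(b ⊗ a) = ((a₍₀₎)_R)_[0] ⊗ ((a₍₀₎)_R)_[1] · b_R · a₍₁₎`. -/
def twistPrime (mB : B ⊗[k] B →ₗ[k] B) (R : B ⊗[k] A →ₗ[k] A ⊗[k] B)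
    (ρ lam : A →ₗ[k] A ⊗[k] B) : B ⊗[k] A →ₗ[k] A ⊗[k] B :=
  TensorProduct.map LinearMap.id (mB ∘ₗ TensorProduct.map LinearMap.id mB)
    ∘ₗ (TensorProduct.assoc k A B (B ⊗[k] B)).toLinearMap
    ∘ₗ (TensorProduct.assoc k (A ⊗[k] B) B B).toLinearMap
    ∘ₗ TensorProduct.map (TensorProduct.map lam LinearMap.id) LinearMap.id
    ∘ₗ TensorProduct.map R LinearMap.id
    ∘ₗ (TensorProduct.assoc k B A B).symm.toLinearMap
    ∘ₗ TensorProduct.map LinearMap.id ρ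

/-- The right-hand side of condition (4.7):
`a ⊗ a' ↦ a_[0] * (a'_R)_[0] ⊗ (a'_R)_[1] (a_[1])_R`. -/
def lamMulMap (st : A ⊗[k] A →ₗ[k] A) (mB : B ⊗[k] B →ₗ[k] B)
    (R : B ⊗[k] A →ₗ[k] A ⊗[k] B) (lam : A →ₗ[k] A ⊗[k] B) :
    A ⊗[k] A →ₗ[k] A ⊗[k] B :=
  TensorProduct.map st mB
    ∘ₗ (TensorProduct.assoc k A A (B ⊗[k] B)).symm.toLinearMap
    ∘ₗ TensorProduct.map LinearMap.id (TensorProduct.assoc k A B B).toLinearMap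
    ∘ₗ TensorProduct.map LinearMap.id (TensorProduct.map lam LinearMap.id)
    ∘ₗ TensorProduct.map LinearMap.id R
    ∘ₗ (TensorProduct.assoc k A B A).toLinearMap
    ∘ₗ TensorProduct.map lam LinearMap.id

/-- `a ↦ a₍₀₎_[0] ⊗ a₍₀₎_[1] · a₍₁₎` : apply `g` to the first leg of `f` and
multiply the `B`-legs; used in conditions (4.8)/(4.9). -/
def sweedlerContract (mB : B ⊗[k] B →ₗ[k] B) (f g : A →ₗ[k] A ⊗[k] B) :
    A →ₗ[k] A ⊗[k] B :=
  TensorProduct.map LinearMap.id mB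
    ∘ₗ (TensorProduct.assoc k A B B).toLinearMap
    ∘ₗ TensorProduct.map g LinearMap.id
    ∘ₗ f

end Twisting

/-- The twisting-map axioms for two algebras with their ring multiplications. -/
def IsTwistingMap {A B : Type*} [Ring A] [Algebra k A] [Ring B] [Algebra k B]
    (R : B ⊗[k] A →ₗ[k] A ⊗[k] B) : Prop :=
  IsTwistingMapMul (LinearMap.mul' k A) (1 : A) (LinearMap.mul' k B) (1 : B) R



section Aux
variable {A B : Type*} [Ring A] [Algebra k A] [Ring B] [Algebra k B]
variable (R : B ⊗[k] A →ₗ[k] A ⊗[k] B)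

lemma mulOf_tmul (a a' : A) (b b' : B) :
    mulOf (LinearMap.mul' k A) (LinearMap.mul' k B) R ((a ⊗ₜ[k] b) ⊗ₜ[k] (a' ⊗ₜ[k] b')) =
      TensorProduct.map (LinearMap.mulLeft k a) (LinearMap.mulRight k b')
        (R (b ⊗ₜ[k] a')) := by
  simp only [mulOf, LinearMap.comp_apply, LinearEquiv.coe_coe, TensorProduct.assoc_tmul,
    TensorProduct.map_tmul, LinearMap.id_apply, TensorProduct.assoc_symm_tmul]
  induction R (b ⊗ₜ[k] a') using TensorProduct.induction_on with
  | zero => simp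
  | tmul p q => simp [mul_comm]
  | add u v hu hv =>
      simp only [TensorProduct.add_tmul, TensorProduct.tmul_add, map_add, hu, hv]

/-- `p ⊗ q ↦ Σ p·αᵢ ⊗ βᵢ` where `R (q ⊗ a') = Σ αᵢ ⊗ βᵢ`. -/
def phi (a' : A) : A ⊗[k] B →ₗ[k] A ⊗[k] B :=
  TensorProduct.map (LinearMap.mul' k A) LinearMap.id
    ∘ₗ (TensorProduct.assoc k A A B).symm.toLinearMap
    ∘ₗ LinearMap.lTensor A (R ∘ₗ (TensorProduct.mk k B A).flip a')

/-- `p ⊗ q ↦ Σ αᵢ ⊗ βᵢ·q` where `R (b ⊗ p) = Σ αᵢ ⊗ βᵢ`. -/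
def psi (b : B) : A ⊗[k] B →ₗ[k] A ⊗[k] B :=
  TensorProduct.map LinearMap.id (LinearMap.mul' k B)
    ∘ₗ (TensorProduct.assoc k A B B).toLinearMap
    ∘ₗ LinearMap.rTensor B (R ∘ₗ (TensorProduct.mk k B A) b)

lemma phi_tmul (a' p : A) (q : B) :
    phi R a' (p ⊗ₜ[k] q) =
      TensorProduct.map (LinearMap.mulLeft k p) LinearMap.id (R (q ⊗ₜ[k] a')) := by
  simp only [phi, LinearMap.comp_apply, LinearEquiv.coe_coe, LinearMap.lTensor_tmul,
    TensorProduct.mk_apply, LinearMap.flip_apply]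
  induction R (q ⊗ₜ[k] a') using TensorProduct.induction_on with
  | zero => simp
  | tmul α β => simp
  | add u v hu hv => simp only [TensorProduct.tmul_add, map_add, hu, hv]

lemma psi_tmul (b : B) (p : A) (q : B) :
    psi R b (p ⊗ₜ[k] q) =
      TensorProduct.map LinearMap.id (LinearMap.mulRight k q) (R (b ⊗ₜ[k] p)) := by
  simp only [psi, LinearMap.comp_apply, LinearEquiv.coe_coe, LinearMap.rTensor_tmul,
    TensorProduct.mk_apply]
  induction R (b ⊗ₜ[k] p) using TensorProduct.induction_on with
  | zero => simp
  | tmul α β => simp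
  | add u v hu hv => simp only [TensorProduct.add_tmul, map_add, hu, hv]

lemma chain3 (a' : A) (u : A ⊗[k] B) :
    TensorProduct.map (LinearMap.mul' k A) LinearMap.id
      ((TensorProduct.assoc k A A B).symm
        ((TensorProduct.map LinearMap.id R)
          ((TensorProduct.assoc k A B A) (u ⊗ₜ[k] a')))) = phi R a' u := by
  induction u using TensorProduct.induction_on with
  | zero => simp
  | tmul p q =>
      rw [phi_tmul]
      simp only [TensorProduct.assoc_tmul, TensorProduct.map_tmul, LinearMap.id_apply]
      induction R (q ⊗ₜ[k] a') using TensorProduct.induction_on with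
      | zero => simp
      | tmul α β => simp
      | add u v hu hv => simp only [TensorProduct.tmul_add, map_add, hu, hv]
  | add u v hu hv => simp only [TensorProduct.add_tmul, map_add, hu, hv]

lemma cond3 (hR : IsTwistingMap R) (b : B) (a a' : A) :
    R (b ⊗ₜ[k] (a * a')) = phi R a' (R (b ⊗ₜ[k] a)) := by
  have h := LinearMap.congr_fun hR.2.2.1 (b ⊗ₜ[k] (a ⊗ₜ[k] a'))
  simp only [LinearMap.comp_apply, TensorProduct.map_tmul, LinearMap.id_apply,
    LinearMap.mul'_apply, LinearEquiv.coe_coe, TensorProduct.assoc_symm_tmul] at h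
  rw [h, chain3]

lemma chain4 (b : B) (u : A ⊗[k] B) :
    TensorProduct.map LinearMap.id (LinearMap.mul' k B)
      ((TensorProduct.assoc k A B B)
        ((TensorProduct.map R LinearMap.id)
          ((TensorProduct.assoc k B A B).symm (b ⊗ₜ[k] u)))) = psi R b u := by
  induction u using TensorProduct.induction_on with
  | zero => simp
  | tmul p q =>
      rw [psi_tmul]
      simp only [TensorProduct.assoc_symm_tmul, TensorProduct.map_tmul, LinearMap.id_apply]
      induction R (b ⊗ₜ[k] p) using TensorProduct.induction_on with
      | zero => simp
      | tmul α β => simp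
      | add u v hu hv => simp only [TensorProduct.add_tmul, map_add, hu, hv]
  | add u v hu hv => simp only [TensorProduct.tmul_add, map_add, hu, hv]

lemma cond4 (hR : IsTwistingMap R) (b b' : B) (a : A) :
    R ((b * b') ⊗ₜ[k] a) = psi R b (R (b' ⊗ₜ[k] a)) := by
  have h := LinearMap.congr_fun hR.2.2.2 ((b ⊗ₜ[k] b') ⊗ₜ[k] a)
  simp only [LinearMap.comp_apply, TensorProduct.map_tmul, LinearMap.id_apply,
    LinearMap.mul'_apply, LinearEquiv.coe_coe, TensorProduct.assoc_tmul] at h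
  rw [h, chain4]

lemma L1 (w : A ⊗[k] B) (p' : A) (q' : B) :
    TensorProduct.map LinearMap.id (LinearMap.mulRight k q') (phi R p' w) =
      mulOf (LinearMap.mul' k A) (LinearMap.mul' k B) R (w ⊗ₜ[k] (p' ⊗ₜ[k] q')) := by
  induction w using TensorProduct.induction_on with
  | zero => simp
  | tmul p q =>
      rw [phi_tmul, mulOf_tmul]
      induction R (q ⊗ₜ[k] p') using TensorProduct.induction_on with
      | zero => simp
      | tmul α β => simp
      | add u v hu hv => simp only [map_add, hu, hv]
  | add u v hu hv => simp only [TensorProduct.add_tmul, map_add, hu, hv]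

lemma L2 (v : A ⊗[k] B) (p : A) (q : B) :
    TensorProduct.map (LinearMap.mulLeft k p) LinearMap.id (psi R q v) =
      mulOf (LinearMap.mul' k A) (LinearMap.mul' k B) R ((p ⊗ₜ[k] q) ⊗ₜ[k] v) := by
  induction v using TensorProduct.induction_on with
  | zero => simp
  | tmul p' q' =>
      rw [psi_tmul, mulOf_tmul]
      induction R (q ⊗ₜ[k] p') using TensorProduct.induction_on with
      | zero => simp
      | tmul α β => simp
      | add u v hu hv => simp only [map_add, hu, hv]
  | add u v hu hv => simp only [TensorProduct.tmul_add, map_add, hu, hv]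

lemma L3 (hR : IsTwistingMap R) (a a'' : A) (b' b'' : B) (w : A ⊗[k] B) :
    mulOf (LinearMap.mul' k A) (LinearMap.mul' k B) R
      ((TensorProduct.map (LinearMap.mulLeft k a) (LinearMap.mulRight k b') w)
        ⊗ₜ[k] (a'' ⊗ₜ[k] b'')) =
    TensorProduct.map (LinearMap.mulLeft k a) (LinearMap.mulRight k b'')
      (mulOf (LinearMap.mul' k A) (LinearMap.mul' k B) R (w ⊗ₜ[k] R (b' ⊗ₜ[k] a''))) := by
  induction w using TensorProduct.induction_on with
  | zero => simp
  | tmul p q =>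
      rw [TensorProduct.map_tmul, LinearMap.mulLeft_apply, LinearMap.mulRight_apply,
        mulOf_tmul, cond4 R hR, ← L2]
      induction psi R q (R (b' ⊗ₜ[k] a'')) using TensorProduct.induction_on with
      | zero => simp
      | tmul α β => simp [mul_assoc]
      | add u v hu hv => simp only [map_add, hu, hv]
  | add u v hu hv => simp only [map_add, TensorProduct.add_tmul, hu, hv]

lemma L4 (hR : IsTwistingMap R) (a a' : A) (b b'' : B) (v : A ⊗[k] B) :
    mulOf (LinearMap.mul' k A) (LinearMap.mul' k B) R
      ((a ⊗ₜ[k] b) ⊗ₜ[k]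
        (TensorProduct.map (LinearMap.mulLeft k a') (LinearMap.mulRight k b'') v)) =
    TensorProduct.map (LinearMap.mulLeft k a) (LinearMap.mulRight k b'')
      (mulOf (LinearMap.mul' k A) (LinearMap.mul' k B) R (R (b ⊗ₜ[k] a') ⊗ₜ[k] v)) := by
  induction v using TensorProduct.induction_on with
  | zero => simp
  | tmul p' q' =>
      rw [TensorProduct.map_tmul, LinearMap.mulLeft_apply, LinearMap.mulRight_apply,
        mulOf_tmul, cond3 R hR, ← L1]
      induction phi R p' (R (b ⊗ₜ[k] a')) using TensorProduct.induction_on with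
      | zero => simp
      | tmul α β => simp [mul_assoc]
      | add u v hu hv => simp only [map_add, hu, hv]
  | add u v hu hv => simp only [map_add, TensorProduct.tmul_add, hu, hv]

end Aux

/-- If `R : B ⊗ A → A ⊗ B` is a twisting map, then the
multiplication `(a ⊗ b)(a' ⊗ b') = a a'_R ⊗ b_R b'` on `A ⊗ B` is associative
with unit `1 ⊗ 1`. -/
theorem twisted_tensor_product_is_algebra
    {A B : Type*} [Ring A] [Algebra k A] [Ring B] [Algebra k B]
    (R : B ⊗[k] A →ₗ[k] A ⊗[k] B) (hR : IsTwistingMap R) :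
    (∀ x : A ⊗[k] B,
      mulOf (LinearMap.mul' k A) (LinearMap.mul' k B) R
        (((1 : A) ⊗ₜ[k] (1 : B)) ⊗ₜ[k] x) = x) ∧
    (∀ x : A ⊗[k] B,
      mulOf (LinearMap.mul' k A) (LinearMap.mul' k B) R
        (x ⊗ₜ[k] ((1 : A) ⊗ₜ[k] (1 : B))) = x) ∧
    (∀ x y z : A ⊗[k] B,
      mulOf (LinearMap.mul' k A) (LinearMap.mul' k B) R
        ((mulOf (LinearMap.mul' k A) (LinearMap.mul' k B) R (x ⊗ₜ[k] y)) ⊗ₜ[k] z) =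
      mulOf (LinearMap.mul' k A) (LinearMap.mul' k B) R
        (x ⊗ₜ[k] (mulOf (LinearMap.mul' k A) (LinearMap.mul' k B) R (y ⊗ₜ[k] z)))) := by
  obtain ⟨h1, h2, h3, h4⟩ := hR
  refine ⟨?_, ?_, ?_⟩
  · intro x
    induction x using TensorProduct.induction_on with
    | zero => simp
    | tmul a b => rw [mulOf_tmul, h2]; simp
    | add u v hu hv => simp only [TensorProduct.tmul_add, map_add, hu, hv]
  · intro x
    induction x using TensorProduct.induction_on with
    | zero => simp
    | tmul a b => rw [mulOf_tmul, h1]; simp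
    | add u v hu hv => simp only [TensorProduct.add_tmul, map_add, hu, hv]
  · intro x y z
    induction x using TensorProduct.induction_on with
    | zero => simp
    | add u v hu hv => simp only [TensorProduct.add_tmul, map_add, hu, hv]
    | tmul a b =>
      induction y using TensorProduct.induction_on with
      | zero => simp
      | add u v hu hv =>
          simp only [TensorProduct.add_tmul, TensorProduct.tmul_add, map_add, hu, hv]
      | tmul a' b' =>
        induction z using TensorProduct.induction_on with
        | zero => simp
        | add u v hu hv =>
            simp only [TensorProduct.add_tmul, TensorProduct.tmul_add, map_add, hu, hv]
        | tmul a'' b'' =>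
            rw [mulOf_tmul R a a' b b', mulOf_tmul R a' a'' b' b'',
              L3 R ⟨h1, h2, h3, h4⟩, L4 R ⟨h1, h2, h3, h4⟩]


end IUT
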